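/- Suppose λ₁ and λ₂ respectively denote the principal eigenvalues of the eigenvalue problems (2.18) and (2.19) associated with parameters H'(0), G'(0) > 0. Then: if λ₁ ≥ 0, λ₁/max{H'(0),G'(0)} ≤ λ₂ ≤ λ₁/min{H'(0),G'(0)}; if λ₁ < 0, λ₁/min{H'(0),G'(0)} ≤ λ₂ ≤ λ₁/max{H'(0),G'(0)}. In particular λ₁ and λ₂ have the same sign. (It suffices to prove the abstract comparison: if L[φ] = λ₁ φ with φ ∈ X^{++} and M[φ] is obtained from L by dividing the first row by H'(0) and the second by G'(0), then the principal eigenvalue λ₂ of M satisfies the above bounds.) -/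
import Mathlib


open Set

/-- Abstract comparison of the principal eigenvalues of problems (2.18) (operator `L`)
and (2.19) (operator `M`, obtained by dividing the two rows of `L` by `H'(0)` and
`G'(0)` respectively), assuming the sub/supersolution characterization of the
principal eigenvalue `lam2` of `M` (Lemma 2.1). -/
theorem stmt_6 (l H0 G0 lam1 lam2 : ℝ) (hl : 0 < l) (hH0 : 0 < H0) (hG0 : 0 < G0)
    (L1 L2 M1 M2 : (ℝ → ℝ) → (ℝ → ℝ) → ℝ → ℝ)
    (hM1 : ∀ f g x, M1 f g x = (1 / H0) * (L1 f g x - H0 * g x) + g x)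
    (hM2 : ∀ f g x, M2 f g x = (1 / G0) * (L2 f g x - G0 * f x) + f x)
    (φ₁ φ₂ : ℝ → ℝ)
    (hφpos : ∀ x ∈ Icc 0 l, 0 < φ₁ x ∧ 0 < φ₂ x)
    (heig : ∀ x ∈ Icc 0 l, L1 φ₁ φ₂ x = lam1 * φ₁ x ∧ L2 φ₁ φ₂ x = lam1 * φ₂ x)
    (hsub : ∀ (lam : ℝ) (f g : ℝ → ℝ), (∀ x ∈ Icc 0 l, 0 < f x ∧ 0 < g x) →
      (∀ x ∈ Icc 0 l, M1 f g x ≤ lam * f x ∧ M2 f g x ≤ lam * g x) → lam2 ≤ lam)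
    (hsup : ∀ (lam : ℝ) (f g : ℝ → ℝ), (∀ x ∈ Icc 0 l, 0 < f x ∧ 0 < g x) →
      (∀ x ∈ Icc 0 l, lam * f x ≤ M1 f g x ∧ lam * g x ≤ M2 f g x) → lam ≤ lam2) :
    (0 ≤ lam1 → lam1 / max H0 G0 ≤ lam2 ∧ lam2 ≤ lam1 / min H0 G0) ∧
    (lam1 < 0 → lam1 / min H0 G0 ≤ lam2 ∧ lam2 ≤ lam1 / max H0 G0) ∧
    (0 < lam1 ↔ 0 < lam2) ∧ (lam1 = 0 ↔ lam2 = 0) ∧ (lam1 < 0 ↔ lam2 < 0) := by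

  have hmin : (0:ℝ) < min H0 G0 := lt_min hH0 hG0
  have hmax : (0:ℝ) < max H0 G0 := lt_of_lt_of_le hH0 (le_max_left _ _)
  have hM1' : ∀ x ∈ Icc (0:ℝ) l, M1 φ₁ φ₂ x = (lam1 / H0) * φ₁ x := by
    intro x hx
    rw [hM1, (heig x hx).1]
    field_simp
    ring
  have hM2' : ∀ x ∈ Icc (0:ℝ) l, M2 φ₁ φ₂ x = (lam1 / G0) * φ₂ x := by
    intro x hx
    rw [hM2, (heig x hx).2]
    field_simp
    ring
  have key_le : ∀ c : ℝ, lam1 / H0 ≤ c → lam1 / G0 ≤ c → lam2 ≤ c := by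
    intro c h1 h2
    refine hsub c φ₁ φ₂ hφpos (fun x hx => ⟨?_, ?_⟩)
    · rw [hM1' x hx]; exact mul_le_mul_of_nonneg_right h1 (hφpos x hx).1.le
    · rw [hM2' x hx]; exact mul_le_mul_of_nonneg_right h2 (hφpos x hx).2.le
  have key_ge : ∀ c : ℝ, c ≤ lam1 / H0 → c ≤ lam1 / G0 → c ≤ lam2 := by
    intro c h1 h2
    refine hsup c φ₁ φ₂ hφpos (fun x hx => ⟨?_, ?_⟩)
    · rw [hM1' x hx]; exact mul_le_mul_of_nonneg_right h1 (hφpos x hx).1.le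
    · rw [hM2' x hx]; exact mul_le_mul_of_nonneg_right h2 (hφpos x hx).2.le
  have hHm := le_max_left H0 G0
  have hGm := le_max_right H0 G0
  have hmH := min_le_left H0 G0
  have hmG := min_le_right H0 G0
  have hnn : 0 ≤ lam1 → lam1 / max H0 G0 ≤ lam2 ∧ lam2 ≤ lam1 / min H0 G0 := by
    intro h
    constructor
    · refine key_ge _ ?_ ?_ <;> rw [div_le_div_iff₀ hmax (by positivity)] <;> nlinarith
    · refine key_le _ ?_ ?_ <;> rw [div_le_div_iff₀ (by positivity) hmin] <;> nlinarith
  have hneg : lam1 < 0 → lam1 / min H0 G0 ≤ lam2 ∧ lam2 ≤ lam1 / max H0 G0 := by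
    intro h
    constructor
    · refine key_ge _ ?_ ?_ <;> rw [div_le_div_iff₀ hmin (by positivity)] <;> nlinarith
    · refine key_le _ ?_ ?_ <;> rw [div_le_div_iff₀ (by positivity) hmax] <;> nlinarith
  have hzero : lam1 = 0 → lam2 = 0 := by
    intro h
    have h1 := (hnn (le_of_eq h.symm))
    rw [h] at h1
    simp only [zero_div] at h1
    linarith [h1.1, h1.2]
  have hposf : 0 < lam1 → 0 < lam2 := fun h =>
    lt_of_lt_of_le (div_pos h hmax) (hnn h.le).1
  have hnegf : lam1 < 0 → lam2 < 0 := fun h =>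
    lt_of_le_of_lt (hneg h).2 (div_neg_of_neg_of_pos h hmax)
  refine ⟨hnn, hneg, ⟨hposf, fun h2 => ?_⟩, ⟨hzero, fun h2 => ?_⟩, ⟨hnegf, fun h2 => ?_⟩⟩
  · rcases lt_trichotomy lam1 0 with h | h | h
    · linarith [hnegf h]
    · linarith [hzero h]
    · exact h
  · rcases lt_trichotomy lam1 0 with h | h | h
    · linarith [hnegf h]
    · exact h
    · linarith [hposf h]
  · rcases lt_trichotomy lam1 0 with h | h | h
    · exact h
    · linarith [hzero h]
    · linarith [hposf h]
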